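/- Alexander trick (cone extension): every homeomorphism of the two-sphere extends to a homeomorphism of the three-ball. Precisely, if f is a homeomorphism of the unit sphere of EuclideanSpace ℝ (Fin 3) onto itself, then there exists a homeomorphism F of the closed unit ball of EuclideanSpace ℝ (Fin 3) onto itself whose restriction to the unit sphere equals f. -/

import Mathlib

noncomputable section AlexanderAux

local notation "E" => EuclideanSpace ℝ (Fin 3)

def alexP0 : ↥(Metric.sphere (0 : E) 1) :=
  ⟨EuclideanSpace.single 0 1, by simp [mem_sphere_zero_iff_norm]⟩

open Classical in
noncomputable def alexProj (x : E) : ↥(Metric.sphere (0 : E) 1) :=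
  if hx : x = 0 then alexP0 else
    ⟨‖x‖⁻¹ • x, by
      simp [mem_sphere_zero_iff_norm, norm_smul, inv_mul_cancel₀ (norm_ne_zero_iff.2 hx)]⟩

lemma alexProj_val {x : E} (hx : x ≠ 0) : (alexProj x : E) = ‖x‖⁻¹ • x := by
  simp [alexProj, hx]

def alexExt (f : ↥(Metric.sphere (0 : E) 1) ≃ₜ ↥(Metric.sphere (0 : E) 1)) (x : E) : E :=
  ‖x‖ • (f (alexProj x) : E)

lemma alexExt_norm (f : ↥(Metric.sphere (0 : E) 1) ≃ₜ ↥(Metric.sphere (0 : E) 1)) (x : E) :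
    ‖alexExt f x‖ = ‖x‖ := by
  have h : ‖(f (alexProj x) : E)‖ = 1 := mem_sphere_zero_iff_norm.1 (f (alexProj x)).2
  simp [alexExt, norm_smul, h]

lemma alexExt_zero (f : ↥(Metric.sphere (0 : E) 1) ≃ₜ ↥(Metric.sphere (0 : E) 1)) :
    alexExt f 0 = 0 := by simp [alexExt]

lemma alexExt_continuous (f : ↥(Metric.sphere (0 : E) 1) ≃ₜ ↥(Metric.sphere (0 : E) 1)) :
    Continuous (alexExt f) := by
  rw [continuous_iff_continuousAt]
  intro x0
  by_cases hx0 : x0 = 0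
  · subst hx0
    rw [ContinuousAt, alexExt_zero]
    rw [tendsto_zero_iff_norm_tendsto_zero]
    simp only [alexExt_norm]
    exact continuous_norm.tendsto' 0 0 (by simp)
  · have hopen : {x : E | x ≠ 0} ∈ nhds x0 := isOpen_ne.mem_nhds hx0
    have hproj : ContinuousAt (alexProj) x0 := by
      rw [Topology.IsInducing.subtypeVal.continuousAt_iff]
      have heq : (Subtype.val ∘ alexProj : E → E) =ᶠ[nhds x0] fun x => ‖x‖⁻¹ • x := by
        filter_upwards [hopen] with x hx
        simp [Function.comp, alexProj_val hx]
      refine ContinuousAt.congr ?_ heq.symm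
      exact ((continuous_norm.continuousAt.inv₀ (norm_ne_zero_iff.2 hx0)).smul
        continuousAt_id)
    exact continuous_norm.continuousAt.smul
      ((continuous_subtype_val.continuousAt).comp ((f.continuous.continuousAt).comp hproj))

lemma alexExt_symm_apply (f : ↥(Metric.sphere (0 : E) 1) ≃ₜ ↥(Metric.sphere (0 : E) 1))
    (x : E) : alexExt f.symm (alexExt f x) = x := by
  by_cases hx : x = 0
  · simp [hx, alexExt_zero]
  · have hn : ‖x‖ ≠ 0 := norm_ne_zero_iff.2 hx
    have hy : alexExt f x ≠ 0 := by
      rw [← norm_ne_zero_iff, alexExt_norm]; exact hn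
    have hval : (alexProj (alexExt f x) : E) = (f (alexProj x) : E) := by
      rw [alexProj_val hy, alexExt_norm]
      simp only [alexExt]
      rw [smul_smul, inv_mul_cancel₀ hn, one_smul]
    have hproj : alexProj (alexExt f x) = f (alexProj x) := Subtype.ext hval
    rw [alexExt, hproj, alexExt_norm, Homeomorph.symm_apply_apply, alexProj_val hx,
      smul_smul, mul_inv_cancel₀ hn, one_smul]

end AlexanderAux

/-- Alexander trick (cone extension): every homeomorphism of the unit
two-sphere extends to a homeomorphism of the closed unit three-ball. -/
theorem alexander_trick
    (f : ↥(Metric.sphere (0 : EuclideanSpace ℝ (Fin 3)) 1) ≃ₜ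
         ↥(Metric.sphere (0 : EuclideanSpace ℝ (Fin 3)) 1)) :
    ∃ F : ↥(Metric.closedBall (0 : EuclideanSpace ℝ (Fin 3)) 1) ≃ₜ
          ↥(Metric.closedBall (0 : EuclideanSpace ℝ (Fin 3)) 1),
      ∀ (x : ↥(Metric.closedBall (0 : EuclideanSpace ℝ (Fin 3)) 1))
        (hx : (x : EuclideanSpace ℝ (Fin 3)) ∈
          Metric.sphere (0 : EuclideanSpace ℝ (Fin 3)) 1),
        (F x : EuclideanSpace ℝ (Fin 3)) = (f ⟨x, hx⟩ : EuclideanSpace ℝ (Fin 3)) := by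
  have hmem : ∀ (g : ↥(Metric.sphere (0 : EuclideanSpace ℝ (Fin 3)) 1) ≃ₜ
      ↥(Metric.sphere (0 : EuclideanSpace ℝ (Fin 3)) 1))
      (x : ↥(Metric.closedBall (0 : EuclideanSpace ℝ (Fin 3)) 1)),
      alexExt g (x : EuclideanSpace ℝ (Fin 3)) ∈
        Metric.closedBall (0 : EuclideanSpace ℝ (Fin 3)) 1 := by
    intro g x
    rw [Metric.mem_closedBall, dist_zero_right, alexExt_norm]
    exact Metric.mem_closedBall.1 x.2 |>.trans_eq' (dist_zero_right _) |>.trans le_rfl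
  refine ⟨{
    toFun := fun x => ⟨alexExt f x, hmem f x⟩
    invFun := fun x => ⟨alexExt f.symm x, hmem f.symm x⟩
    left_inv := fun x => Subtype.ext (alexExt_symm_apply f x)
    right_inv := fun x => by
      have := alexExt_symm_apply f.symm (x : EuclideanSpace ℝ (Fin 3))
      rw [Homeomorph.symm_symm] at this
      exact Subtype.ext this
    continuous_toFun := ((alexExt_continuous f).comp continuous_subtype_val).subtype_mk _
    continuous_invFun := ((alexExt_continuous f.symm).comp continuous_subtype_val).subtype_mk _
  }, ?_⟩
  intro x hx
  have hnorm : ‖(x : EuclideanSpace ℝ (Fin 3))‖ = 1 := mem_sphere_zero_iff_norm.1 hx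
  have hne : (x : EuclideanSpace ℝ (Fin 3)) ≠ 0 := by
    intro h; rw [h, norm_zero] at hnorm; norm_num at hnorm
  show alexExt f (x : EuclideanSpace ℝ (Fin 3)) = _
  have hproj : alexProj (x : EuclideanSpace ℝ (Fin 3)) = ⟨x, hx⟩ := by
    apply Subtype.ext
    rw [alexProj_val hne, hnorm]
    simp
  rw [alexExt, hproj, hnorm, one_smul]
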